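/- A nondegenerate CSBP Z with branching mechanism ψ is absorbed at 0 in finite time with positive probability, i.e. P(∃ t > 0: Z_t = 0) > 0, if and only if ∫^∞ dx/ψ(x) < ∞. -/

import Mathlib

open MeasureTheory Filter
open scoped ENNReal

open Set intervalIntegral Topology

section CSBPAux

lemma J_nonneg {x : ℝ} (hx : 0 ≤ x) : 0 ≤ Real.exp (-x) - 1 + x := by
  have := Real.add_one_le_exp (-x)
  linarith

lemma J_le_min {x : ℝ} (hx : 0 ≤ x) : Real.exp (-x) - 1 + x ≤ min x (x^2) := by
  rcases le_total x 1 with h1 | h1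
  · have habs : |Real.exp (-x) - 1 - (-x)| ≤ (-x) ^ 2 :=
      Real.abs_exp_sub_one_sub_id_le (by rwa [abs_neg, abs_of_nonneg hx])
    have h2 : Real.exp (-x) - 1 + x ≤ x ^ 2 := by
      have := (abs_le.1 habs).2
      simpa [sub_neg_eq_add] using this.trans_eq (by ring)
    have h3 : x ^ 2 ≤ x := by nlinarith
    simpa [min_eq_right (by nlinarith : x^2 ≤ x)] using h2
  · have h2 : Real.exp (-x) ≤ 1 := Real.exp_le_one_iff.mpr (by linarith)
    have h3 : x ≤ x ^ 2 := by nlinarith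
    rw [min_eq_left h3]; linarith

lemma J_bound {lam h : ℝ} (hlam : 0 ≤ lam) (hh : 0 < h) :
    Real.exp (-(lam*h)) - 1 + lam*h ≤ (lam + lam^2) * min h (h^2) := by
  have hx : 0 ≤ lam * h := mul_nonneg hlam hh.le
  have := J_le_min hx
  rcases le_total h 1 with h1 | h1
  · have : Real.exp (-(lam*h)) - 1 + lam*h ≤ (lam*h)^2 := this.trans (min_le_right _ _)
    have hmin : min h (h^2) = h^2 := min_eq_right (by nlinarith)
    rw [hmin]; nlinarith
  · have : Real.exp (-(lam*h)) - 1 + lam*h ≤ lam*h := this.trans (min_le_left _ _)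
    have hmin : min h (h^2) = h := min_eq_left (by nlinarith)
    rw [hmin]; nlinarith


lemma min_integrable (μjump : Measure ℝ)
    (hmom : (∫⁻ h in Set.Ioi (0 : ℝ), ENNReal.ofReal (min h (h ^ 2)) ∂μjump) ≠ ⊤) :
    IntegrableOn (fun h => min h (h^2)) (Set.Ioi (0:ℝ)) μjump := by
  constructor
  · exact (continuous_id.min (continuous_pow 2)).aestronglyMeasurable
  · rw [HasFiniteIntegral]
    calc ∫⁻ h in Set.Ioi (0:ℝ), ‖min h (h^2)‖₊ ∂μjump
        = ∫⁻ h in Set.Ioi (0:ℝ), ENNReal.ofReal (min h (h^2)) ∂μjump := by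
          apply setLIntegral_congr_fun measurableSet_Ioi
          intro h hh
          dsimp only
          rw [← enorm_eq_nnnorm, ← ofReal_norm, Real.norm_eq_abs,
            abs_of_nonneg (le_min hh.le (sq_nonneg h))]
      _ < ⊤ := hmom.lt_top

lemma J_integrable (μjump : Measure ℝ)
    (hmom : (∫⁻ h in Set.Ioi (0 : ℝ), ENNReal.ofReal (min h (h ^ 2)) ∂μjump) ≠ ⊤)
    {lam : ℝ} (hlam : 0 ≤ lam) :
    IntegrableOn (fun h => Real.exp (-lam * h) - 1 + lam * h) (Set.Ioi (0:ℝ)) μjump := by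
  apply Integrable.mono ((min_integrable μjump hmom).smul ((lam + lam^2)))
  · exact ((((Real.continuous_exp.comp (continuous_const.mul continuous_id)).sub
      continuous_const).add (continuous_const.mul continuous_id))).aestronglyMeasurable
  · filter_upwards [ae_restrict_mem measurableSet_Ioi] with h hh
    have h0 : 0 ≤ Real.exp (-(lam*h)) - 1 + lam*h := J_nonneg (mul_nonneg hlam hh.le)
    have h1 := J_bound hlam hh
    have h2 : 0 ≤ min h (h^2) := le_min hh.le (sq_nonneg h)
    simp only [Real.norm_eq_abs, Pi.smul_apply, smul_eq_mul, neg_mul]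
    rw [abs_of_nonneg (by linarith), abs_of_nonneg (by nlinarith)]
    nlinarith


section Psi
variable (r γ : ℝ) (μjump : Measure ℝ) (ψ : ℝ → ℝ)

lemma psi_zero (hψ : ∀ lam, ψ lam = -r * lam + γ * lam ^ 2 +
      ∫ h in Set.Ioi (0 : ℝ), (Real.exp (-lam * h) - 1 + lam * h) ∂μjump) :
    ψ 0 = 0 := by
  rw [hψ]; simp

lemma psi_convex (hγ : 0 ≤ γ)
    (hmom : (∫⁻ h in Set.Ioi (0 : ℝ), ENNReal.ofReal (min h (h ^ 2)) ∂μjump) ≠ ⊤)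
    (hψ : ∀ lam, ψ lam = -r * lam + γ * lam ^ 2 +
      ∫ h in Set.Ioi (0 : ℝ), (Real.exp (-lam * h) - 1 + lam * h) ∂μjump) :
    ConvexOn ℝ (Set.Ici 0) ψ := by
  constructor
  · exact convex_Ici 0
  · rintro x (hx : (0:ℝ) ≤ x) y (hy : (0:ℝ) ≤ y) a b ha hb hab
    have hxy : 0 ≤ a * x + b * y := by positivity
    have hIneq : ∀ h ∈ Set.Ioi (0:ℝ),
        Real.exp (-(a*x+b*y) * h) - 1 + (a*x+b*y) * h ≤
        a * (Real.exp (-x*h) - 1 + x*h) + b * (Real.exp (-y*h) - 1 + y*h) := by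
      intro h hh
      have hexp : Real.exp (a * (-x*h) + b * (-y*h)) ≤
          a * Real.exp (-x*h) + b * Real.exp (-y*h) :=
        convexOn_exp.2 (Set.mem_univ _) (Set.mem_univ _) ha hb hab
      have : -(a*x+b*y) * h = a * (-x*h) + b * (-y*h) := by ring
      rw [this]
      nlinarith [hexp]
    have int0 := J_integrable μjump hmom hxy
    have intx := J_integrable μjump hmom hx
    have inty := J_integrable μjump hmom hy
    have hmono : (∫ h in Set.Ioi (0:ℝ), (Real.exp (-(a*x+b*y) * h) - 1 + (a*x+b*y) * h) ∂μjump)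
        ≤ ∫ h in Set.Ioi (0:ℝ),
            (a * (Real.exp (-x*h) - 1 + x*h) + b * (Real.exp (-y*h) - 1 + y*h)) ∂μjump := by
      apply setIntegral_mono_on int0 ((intx.const_mul a).add (inty.const_mul b))
        measurableSet_Ioi hIneq
    rw [integral_add (intx.const_mul a) (inty.const_mul b),
      MeasureTheory.integral_const_mul, MeasureTheory.integral_const_mul] at hmono
    have hsq : (a*x+b*y)^2 ≤ a * x^2 + b * y^2 := by nlinarith [sq_nonneg (x - y), mul_nonneg ha hb]
    simp only [smul_eq_mul]
    rw [hψ, hψ, hψ]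
    have hγsq : γ * (a*x+b*y)^2 ≤ a * (γ * x^2) + b * (γ * y^2) := by nlinarith
    nlinarith [hmono]

lemma convex_interp (hconv : ConvexOn ℝ (Set.Ici 0) ψ) (h0 : ψ 0 = 0)
    {v w : ℝ} (hv : 0 < v) (hvw : v ≤ w) : ψ v ≤ (v / w) * ψ w := by
  have hw : 0 < w := hv.trans_le hvw
  have ha : (0:ℝ) ≤ v / w := by positivity
  have hb : (0:ℝ) ≤ 1 - v / w := by
    have : v / w ≤ 1 := (div_le_one hw).2 hvw
    linarith
  have := hconv.2 (Set.mem_Ici.2 hw.le) (Set.mem_Ici.2 le_rfl) ha hb (by ring)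
  simp only [smul_eq_mul, mul_zero, add_zero, h0] at this
  rw [div_mul_cancel₀ _ hw.ne'] at this
  linarith

lemma psi_lin_lower (hconv : ConvexOn ℝ (Set.Ici 0) ψ) (h0 : ψ 0 = 0)
    {v w : ℝ} (hv : 0 < v) (hvw : v ≤ w) : (ψ v / v) * w ≤ ψ w := by
  have hw : 0 < w := hv.trans_le hvw
  have := convex_interp ψ hconv h0 hv hvw
  rw [div_mul_eq_mul_div, div_le_iff₀ hv, ← sub_nonneg]
  rw [div_mul_eq_mul_div, le_div_iff₀ hw, ← sub_nonneg] at this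
  nlinarith

end Psi


section Psi2
variable (r γ : ℝ) (μjump : Measure ℝ) (ψ : ℝ → ℝ)

lemma psi_not_zero (hγ : 0 ≤ γ)
    (hsupp : μjump (Set.Ioi (0 : ℝ))ᶜ = 0)
    (hmom : (∫⁻ h in Set.Ioi (0 : ℝ), ENNReal.ofReal (min h (h ^ 2)) ∂μjump) ≠ ⊤)
    (hnondeg : ¬ (r = 0 ∧ γ = 0 ∧ μjump = 0))
    (hψ : ∀ lam, ψ lam = -r * lam + γ * lam ^ 2 +
      ∫ h in Set.Ioi (0 : ℝ), (Real.exp (-lam * h) - 1 + lam * h) ∂μjump) :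
    ¬ (∀ v, 0 ≤ v → ψ v = 0) := by
  intro hz
  set I : ℝ → ℝ := fun lam => ∫ h in Set.Ioi (0:ℝ), (Real.exp (-lam * h) - 1 + lam * h) ∂μjump
    with hIdef
  have hInonneg : ∀ lam, 0 ≤ lam → 0 ≤ I lam := by
    intro lam hlam
    apply setIntegral_nonneg measurableSet_Ioi
    intro h hh
    have := J_nonneg (mul_nonneg hlam (le_of_lt hh))
    simpa [neg_mul] using this
  have hI : ∀ lam, 0 ≤ lam → I lam = r * lam - γ * lam ^ 2 := by
    intro lam hlam
    have := hψ lam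
    rw [hz lam hlam] at this
    linarith [this]
  -- γ = 0
  have hγ0 : γ = 0 := by
    by_contra hγne
    have hγpos : 0 < γ := lt_of_le_of_ne hγ (Ne.symm hγne)
    have hr : 0 ≤ r - γ := by
      have := hInonneg 1 zero_le_one
      rw [hI 1 zero_le_one] at this; linarith
    set lam := (r + 1) / γ with hlam
    have hr1 : 0 < r + 1 := by linarith
    have hlampos : 0 < lam := div_pos hr1 hγpos
    have := hInonneg lam hlampos.le
    rw [hI lam hlampos.le] at this
    have hγlam : γ * lam = r + 1 := by rw [hlam]; field_simp
    nlinarith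
  have hIlin : ∀ lam, 0 ≤ lam → I lam = r * lam := by
    intro lam hlam; rw [hI lam hlam, hγ0]; ring
  -- the square identity
  have hexp2 : ∀ h : ℝ, Real.exp (-(2:ℝ) * h) = Real.exp (-h) * Real.exp (-h) := by
    intro h; rw [← Real.exp_add]; ring_nf
  have int2 := J_integrable μjump hmom (by norm_num : (0:ℝ) ≤ 2)
  have int1 := J_integrable μjump hmom (by norm_num : (0:ℝ) ≤ 1)
  have intsq : IntegrableOn (fun h => (1 - Real.exp (-h))^2) (Set.Ioi (0:ℝ)) μjump := by
    have hint := int2.sub (int1.const_mul 2)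
    apply IntegrableOn.congr_fun hint _ measurableSet_Ioi
    intro h hh
    dsimp only [Pi.sub_apply]
    rw [neg_one_mul, hexp2 h]
    ring
  have hsq0 : ∫ h in Set.Ioi (0:ℝ), (1 - Real.exp (-h))^2 ∂μjump = 0 := by
    have heq : ∫ h in Set.Ioi (0:ℝ), (1 - Real.exp (-h))^2 ∂μjump
        = ∫ h in Set.Ioi (0:ℝ), ((Real.exp (-(2:ℝ) * h) - 1 + 2 * h)
            - 2 * (Real.exp (-(1:ℝ) * h) - 1 + 1 * h)) ∂μjump := by
      apply setIntegral_congr_fun measurableSet_Ioi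
      intro h hh
      dsimp only
      rw [neg_one_mul, hexp2 h]
      ring
    rw [heq, integral_sub int2 (int1.const_mul 2), MeasureTheory.integral_const_mul]
    have h2 := hIlin 2 (by norm_num)
    have h1 := hIlin 1 zero_le_one
    simp only [hIdef] at h2 h1
    rw [h2, h1]; ring
  -- μjump (Ioi 0) = 0
  have haez : (fun h => (1 - Real.exp (-h))^2) =ᵐ[μjump.restrict (Set.Ioi 0)] 0 := by
    rw [← integral_eq_zero_iff_of_nonneg_ae _ intsq]
    · exact hsq0
    · filter_upwards with h
      positivity
  have hμIoi : μjump (Set.Ioi (0:ℝ)) = 0 := by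
    have hsub : Set.Ioi (0:ℝ) ⊆ {h : ℝ | ¬ (fun h => (1 - Real.exp (-h))^2) h = (0:ℝ→ℝ) h} := by
      intro h hh
      simp only [Set.mem_setOf_eq, Pi.zero_apply]
      have hlt : Real.exp (-h) < 1 := by
        rw [Real.exp_lt_one_iff]; linarith [Set.mem_Ioi.1 hh]
      have hpos : 0 < 1 - Real.exp (-h) := by linarith
      exact ne_of_gt (pow_pos hpos 2)
    have := ae_iff.1 haez
    have hle := measure_mono (μ := μjump.restrict (Set.Ioi 0)) hsub
    have : μjump.restrict (Set.Ioi 0) (Set.Ioi (0:ℝ)) = 0 :=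
      le_antisymm (le_trans hle (le_of_eq this)) zero_le
    rwa [Measure.restrict_apply_self] at this
  have hμ0 : μjump = 0 := by
    have : μjump Set.univ = 0 := by
      have : μjump Set.univ ≤ μjump (Set.Ioi 0) + μjump (Set.Ioi (0:ℝ))ᶜ := by
        rw [← Set.union_compl_self (Set.Ioi (0:ℝ))]
        exact measure_union_le _ _
      rw [hμIoi, hsupp] at this
      simpa using this
    exact Measure.measure_univ_eq_zero.1 this
  have hr0 : r = 0 := by
    have := hIlin 1 zero_le_one
    simp only [hIdef, hμ0] at this
    simp at this
    linarith [this]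
  exact hnondeg ⟨hr0, hγ0, hμ0⟩

end Psi2


section Psi3
variable (ψ : ℝ → ℝ)

lemma psi_exists_pos_of_integrable (hconv : ConvexOn ℝ (Set.Ici 0) ψ) (h0 : ψ 0 = 0)
    (hnz : ¬ (∀ v, 0 ≤ v → ψ v = 0))
    {a : ℝ} (ha : 0 < a) (hint : IntegrableOn (fun x => (ψ x)⁻¹) (Set.Ioi a)) :
    ∃ v, 0 < v ∧ 0 < ψ v := by
  by_contra hno
  push_neg at hno
  -- hno : ∀ v, 0 < v → ψ v ≤ 0
  by_cases hb : ∃ b, a ≤ b ∧ ψ b < 0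
  · obtain ⟨b, hab, hψb⟩ := hb
    have hbpos : 0 < b := ha.trans_le hab
    have hbne : b ≠ 0 := ne_of_gt hbpos
    -- strict negativity beyond b
    have hnegall : ∀ w, b < w → ψ w < 0 := by
      intro w hw
      rcases lt_or_eq_of_le (hno w (hbpos.trans hw)) with h | h
      · exact h
      · exfalso
        have h2w : (0:ℝ) < 2*w - b := by linarith
        set θ : ℝ := w / (2*w - b) with hθ
        have hθpos : 0 < θ := div_pos (hbpos.trans hw) h2w
        have hθlt : θ < 1 := (div_lt_one h2w).2 (by linarith)
        have hcomb : θ * b + (1 - θ) * (2*w) = w := by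
          have : θ * (2*w - b) = w := div_mul_cancel₀ w h2w.ne'
          linear_combination -this
        have hcv := hconv.2 (Set.mem_Ici.2 hbpos.le)
          (Set.mem_Ici.2 (by linarith : (0:ℝ) ≤ 2*w))
          hθpos.le (by linarith : (0:ℝ) ≤ 1 - θ) (by ring)
        simp only [smul_eq_mul] at hcv
        rw [hcomb] at hcv
        have h2wneg : ψ (2*w) ≤ 0 := hno _ (by linarith)
        nlinarith
    -- linear lower bound
    have hlower : ∀ w, b < w → (w/b) * ψ b ≤ ψ w := by
      intro w hw
      have hwpos : 0 < w := hbpos.trans hw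
      have hwne : w ≠ 0 := ne_of_gt hwpos
      have h2 := mul_le_mul_of_nonneg_left (convex_interp ψ hconv h0 hbpos hw.le)
        (le_of_lt (div_pos hwpos hbpos))
      rwa [show w/b*(b/w*ψ w) = ψ w by field_simp] at h2
    set c : ℝ := b / (-ψ b) with hc
    have hcpos : 0 < c := div_pos hbpos (by linarith)
    have hbound : ∀ w ∈ Set.Ioi b, ‖c * w⁻¹‖ ≤ ‖(ψ w)⁻¹‖ := by
      intro w hw
      have hw' : b < w := hw
      have hwpos : 0 < w := hbpos.trans hw'
      have hψw : ψ w < 0 := hnegall w hw'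
      have h1 : -ψ w ≤ (w/b) * (-ψ b) := by linarith [hlower w hw']
      have h2 : (0:ℝ) < -ψ w := by linarith
      have h3 : (0:ℝ) < (w/b) * (-ψ b) := lt_of_lt_of_le h2 h1
      have h4 : ((w/b) * (-ψ b))⁻¹ ≤ (-ψ w)⁻¹ := by
        apply inv_anti₀ h2 h1
      have h5 : ((w/b) * (-ψ b))⁻¹ = c * w⁻¹ := by
        rw [hc]; field_simp
      rw [Real.norm_eq_abs, Real.norm_eq_abs, abs_inv, abs_of_neg hψw,
        abs_of_pos (by positivity : (0:ℝ) < c * w⁻¹)]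
      rw [h5] at h4
      simpa using h4
    have hint' : IntegrableOn (fun x => (ψ x)⁻¹) (Set.Ioi b) :=
      hint.mono_set (Set.Ioi_subset_Ioi hab)
    have hcinv : IntegrableOn (fun w => c * w⁻¹) (Set.Ioi b) := by
      apply Integrable.mono hint'
        ((measurable_inv.const_mul c).aestronglyMeasurable)
      filter_upwards [ae_restrict_mem measurableSet_Ioi] with w hw
      exact hbound w hw
    have hinv : IntegrableOn (fun w => w⁻¹) (Set.Ioi b) := by
      have := hcinv.const_mul c⁻¹
      apply this.congr
      filter_upwards with w
      field_simp
    have : IntegrableOn (fun x : ℝ => x ^ (-1 : ℝ)) (Set.Ioi b) := by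
      apply hinv.congr_fun _ measurableSet_Ioi
      intro x hx
      dsimp only
      rw [Real.rpow_neg_one]
    rw [integrableOn_Ioi_rpow_iff hbpos] at this
    linarith
  · -- ψ vanishes on [a, ∞), hence everywhere
    push_neg at hb
    have hz : ∀ v, 0 ≤ v → ψ v = 0 := by
      intro v hv
      rcases eq_or_lt_of_le hv with h | hvpos
      · rw [← h, h0]
      rcases le_or_gt a v with h | h
      · exact le_antisymm (hno v hvpos) (hb v h)
      · -- 0 < v < a
        have hψa : ψ a = 0 := le_antisymm (hno a ha) (hb a le_rfl)
        have hψ2a : ψ (2*a) = 0 := le_antisymm (hno _ (by linarith)) (hb _ (by linarith))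
        have h2a : (0:ℝ) < 2*a - v := by linarith
        set θ : ℝ := a / (2*a - v) with hθ
        have hθpos : 0 < θ := div_pos ha h2a
        have hθlt : θ < 1 := (div_lt_one h2a).2 (by linarith)
        have hcomb : θ * v + (1 - θ) * (2*a) = a := by
          have : θ * (2*a - v) = a := div_mul_cancel₀ a h2a.ne'
          linear_combination -this
        have hcv := hconv.2 (Set.mem_Ici.2 hvpos.le)
          (Set.mem_Ici.2 (by linarith : (0:ℝ) ≤ 2*a))
          hθpos.le (by linarith : (0:ℝ) ≤ 1 - θ) (by ring)
        simp only [smul_eq_mul] at hcv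
        rw [hcomb, hψa, hψ2a] at hcv
        have : 0 ≤ ψ v := by nlinarith
        linarith [hno v hvpos]
    exact hnz hz
end Psi3


section ODE
variable (ψ : ℝ → ℝ) (v₀ : ℝ)

lemma phi_cont (hψc : ContinuousOn ψ (Set.Ioi 0)) (hv₀ : 0 < v₀)
    (hψpos : ∀ v, v₀ ≤ v → 0 < ψ v) :
    Continuous (fun v => (ψ (max v v₀))⁻¹) := by
  have hsub : Set.Ici v₀ ⊆ Set.Ioi (0:ℝ) := fun x hx => Set.mem_Ioi.2 (lt_of_lt_of_le hv₀ hx)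
  have h1 : Continuous (fun v : ℝ => ψ (max v v₀)) :=
    ContinuousOn.comp_continuous (hψc.mono hsub)
      (continuous_id.max continuous_const) (fun x => Set.mem_Ici.2 (le_max_right x v₀))
  exact h1.inv₀ (fun x => ne_of_gt (hψpos _ (le_max_right x v₀)))

lemma phi_nonneg (hψpos : ∀ v, v₀ ≤ v → 0 < ψ v) (v : ℝ) :
    0 ≤ (ψ (max v v₀))⁻¹ :=
  inv_nonneg.2 (hψpos _ (le_max_right _ _)).le

lemma H_hasDerivAt (hψc : ContinuousOn ψ (Set.Ioi 0)) (hv₀ : 0 < v₀)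
    (hψpos : ∀ v, v₀ ≤ v → 0 < ψ v) (y : ℝ) :
    HasDerivAt (fun y => ∫ v in v₀..y, (ψ (max v v₀))⁻¹) ((ψ (max y v₀))⁻¹) y := by
  have hc := phi_cont ψ v₀ hψc hv₀ hψpos
  exact integral_hasDerivAt_right (hc.intervalIntegrable _ _)
    (hc.stronglyMeasurableAtFilter _ _) hc.continuousAt

lemma ode_const (hψc : ContinuousOn ψ (Set.Ioi 0)) (hv₀ : 0 < v₀)
    (hψpos : ∀ v, v₀ ≤ v → 0 < ψ v)
    (g : ℝ → ℝ) (hgderiv : ∀ s, 0 ≤ s → HasDerivAt g (-ψ (g s)) s)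
    (σ : ℝ) (hσ : 0 ≤ σ) (hgt : ∀ s, 0 ≤ s → s < σ → v₀ ≤ g s) :
    (∫ v in v₀..(g σ), (ψ (max v v₀))⁻¹) + σ = ∫ v in v₀..(g 0), (ψ (max v v₀))⁻¹ := by
  set H : ℝ → ℝ := fun y => ∫ v in v₀..y, (ψ (max v v₀))⁻¹ with hH
  set F : ℝ → ℝ := fun s => H (g s) + s with hF
  have hgcont : ContinuousOn g (Set.Icc 0 σ) := fun s hs =>
    (hgderiv s hs.1).continuousAt.continuousWithinAt
  have hHcont : Continuous H := by
    have : Differentiable ℝ H := fun y => (H_hasDerivAt ψ v₀ hψc hv₀ hψpos y).differentiableAt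
    exact this.continuous
  have hFcont : ContinuousOn F (Set.Icc 0 σ) :=
    ((hHcont.comp_continuousOn hgcont).add continuousOn_id)
  have hFderiv : ∀ x ∈ Set.Ico 0 σ, HasDerivWithinAt F 0 (Set.Ici x) x := by
    intro x hx
    have hgx : v₀ ≤ g x := hgt x hx.1 hx.2
    have hψgx : 0 < ψ (g x) := hψpos _ hgx
    have hcomp : HasDerivAt (fun s => H (g s)) ((ψ (max (g x) v₀))⁻¹ * (-ψ (g x))) x :=
      (H_hasDerivAt ψ v₀ hψc hv₀ hψpos (g x)).comp x (hgderiv x hx.1)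
    have heval : (ψ (max (g x) v₀))⁻¹ * (-ψ (g x)) + 1 = 0 := by
      rw [max_eq_left hgx]
      field_simp
      ring
    have : HasDerivAt F ((ψ (max (g x) v₀))⁻¹ * (-ψ (g x)) + 1) x :=
      hcomp.add (hasDerivAt_id x)
    rw [heval] at this
    exact this.hasDerivWithinAt
  have := constant_of_has_deriv_right_zero hFcont hFderiv σ (Set.right_mem_Icc.2 hσ)
  simp only [hF, hH] at this
  linarith [this]

end ODE


section ODE2
variable (ψ : ℝ → ℝ)

lemma forward_ode (hconv : ConvexOn ℝ (Set.Ici 0) ψ) (h0 : ψ 0 = 0)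
    (u : ℝ → ℝ → ℝ)
    (hu0 : ∀ lam, 0 ≤ lam → u 0 lam = lam)
    (huode : ∀ lam, 0 ≤ lam → ∀ t, 0 ≤ t → HasDerivAt (fun s => u s lam) (-ψ (u t lam)) t)
    (t : ℝ) (ht : 0 < t) (M : ℝ) (hM0 : 0 ≤ M) (hM : ∀ lam, 0 ≤ lam → u t lam ≤ M) :
    ∃ a, 0 < a ∧ IntegrableOn (fun x => (ψ x)⁻¹) (Set.Ioi a) := by
  have hψc : ContinuousOn ψ (Set.Ioi 0) := by
    have := hconv.continuousOn_interior
    rwa [interior_Ici] at this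
  -- Step 1: find v₀ > M + 1 with ψ v₀ > 0
  obtain ⟨v₀, hv₀M, hψv₀⟩ : ∃ v₀, M + 1 < v₀ ∧ 0 < ψ v₀ := by
    set g : ℝ → ℝ := fun s => u s (M + 2) with hg
    have hlam2 : (0:ℝ) ≤ M + 2 := by linarith
    have hgd : ∀ s, 0 ≤ s → HasDerivAt g (-ψ (g s)) s := fun s hs => huode (M+2) hlam2 s hs
    have hg0 : g 0 = M + 2 := hu0 (M+2) hlam2
    have hgcont : ContinuousOn g (Set.Icc 0 t) := fun s hs =>
      (hgd s hs.1).continuousAt.continuousWithinAt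
    set A : Set ℝ := Set.Icc 0 t ∩ g ⁻¹' (Set.Iic (M+1)) with hA
    have hAclosed : IsClosed A :=
      hgcont.preimage_isClosed_of_isClosed isClosed_Icc isClosed_Iic
    have htA : t ∈ A := ⟨⟨ht.le, le_rfl⟩, by
      simp only [Set.mem_preimage, Set.mem_Iic]; linarith [hM (M+2) hlam2]⟩
    have hAne : A.Nonempty := ⟨t, htA⟩
    have hAbdd : BddBelow A := ⟨0, fun x hx => hx.1.1⟩
    set τ := sInf A with hτ
    have hτA : τ ∈ A := hAclosed.csInf_mem hAne hAbdd
    have hτ0 : 0 ≤ τ := hτA.1.1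
    have hτt : τ ≤ t := hτA.1.2
    have hτpos : 0 < τ := by
      rcases eq_or_lt_of_le hτ0 with h | h
      · exfalso
        have := hτA.2
        simp only [Set.mem_preimage, Set.mem_Iic] at this
        rw [← h, hg0] at this
        linarith
      · exact h
    have hbefore : ∀ s, 0 ≤ s → s < τ → M + 1 < g s := by
      intro s hs0 hsτ
      by_contra hle
      push_neg at hle
      have hsA : s ∈ A := ⟨⟨hs0, hsτ.le.trans hτt⟩, by
        simp only [Set.mem_preimage, Set.mem_Iic]; exact hle⟩
      exact absurd (csInf_le hAbdd hsA) (not_le.2 hsτ)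
    obtain ⟨c, hc, hceq⟩ := exists_hasDerivAt_eq_slope g (fun s => -ψ (g s)) hτpos
      (fun s hs => (hgd s hs.1).continuousAt.continuousWithinAt)
      (fun s hs => hgd s hs.1.le)
    have hgτ : g τ ≤ M + 1 := hτA.2
    have hslope : (g τ - g 0)/τ < 0 := by
      rw [hg0]
      apply div_neg_of_neg_of_pos _ hτpos
      linarith
    have hψgc : 0 < ψ (g c) := by
      rw [sub_zero] at hceq
      rw [← hceq] at hslope
      linarith
    exact ⟨g c, hbefore c hc.1.le hc.2, hψgc⟩
  have hv₀pos : 0 < v₀ := by linarith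
  have hψpos : ∀ v, v₀ ≤ v → 0 < ψ v := by
    intro v hv
    have := psi_lin_lower ψ hconv h0 hv₀pos hv
    have hvpos : 0 < v := lt_of_lt_of_le hv₀pos hv
    have : 0 < (ψ v₀ / v₀) * v := by positivity
    linarith [psi_lin_lower ψ hconv h0 hv₀pos hv]
  set φ : ℝ → ℝ := fun v => (ψ (max v v₀))⁻¹ with hφ
  have hφcont : Continuous φ := phi_cont ψ v₀ hψc hv₀pos hψpos
  have hφnn : ∀ v, 0 ≤ φ v := phi_nonneg ψ v₀ hψpos
  -- Step 2: uniform bound on interval integrals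
  have hbound : ∀ lam, 0 ≤ lam → (∫ v in v₀..lam, φ v) ≤ t := by
    intro lam hlam
    set g : ℝ → ℝ := fun s => u s lam with hg
    have hgd : ∀ s, 0 ≤ s → HasDerivAt g (-ψ (g s)) s := fun s hs => huode lam hlam s hs
    have hg0 : g 0 = lam := hu0 lam hlam
    have hgcont : ContinuousOn g (Set.Icc 0 t) := fun s hs =>
      (hgd s hs.1).continuousAt.continuousWithinAt
    set A : Set ℝ := Set.Icc 0 t ∩ g ⁻¹' (Set.Iic v₀) with hA
    have hAclosed : IsClosed A :=
      hgcont.preimage_isClosed_of_isClosed isClosed_Icc isClosed_Iic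
    have htA : t ∈ A := ⟨⟨ht.le, le_rfl⟩, by
      simp only [Set.mem_preimage, Set.mem_Iic]; linarith [hM lam hlam]⟩
    have hAne : A.Nonempty := ⟨t, htA⟩
    have hAbdd : BddBelow A := ⟨0, fun x hx => hx.1.1⟩
    set τ := sInf A with hτ
    have hτA : τ ∈ A := hAclosed.csInf_mem hAne hAbdd
    have hτ0 : 0 ≤ τ := hτA.1.1
    have hτt : τ ≤ t := hτA.1.2
    have hbefore : ∀ s, 0 ≤ s → s < τ → v₀ ≤ g s := by
      intro s hs0 hsτ
      by_contra hle
      push_neg at hle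
      have hsA : s ∈ A := ⟨⟨hs0, hsτ.le.trans hτt⟩, by
        simp only [Set.mem_preimage, Set.mem_Iic]; exact hle.le⟩
      exact absurd (csInf_le hAbdd hsA) (not_le.2 hsτ)
    have hkey := ode_const ψ v₀ hψc hv₀pos hψpos g hgd τ hτ0 hbefore
    have hgτ : g τ ≤ v₀ := hτA.2
    have hneg : (∫ v in v₀..(g τ), φ v) ≤ 0 := by
      rw [intervalIntegral.integral_symm]
      have : 0 ≤ ∫ v in (g τ)..v₀, φ v :=
        intervalIntegral.integral_nonneg hgτ (fun x _ => hφnn x)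
      linarith
    rw [hg0] at hkey
    have : (∫ v in v₀..lam, φ v) = (∫ v in v₀..(g τ), φ v) + τ := hkey.symm
    linarith
  -- Step 3: integrability of φ on Ioi v₀
  have hφint : IntegrableOn φ (Set.Ioi v₀) := by
    apply integrableOn_Ioi_of_intervalIntegral_norm_bounded t v₀
      (fun i : ℕ => hφcont.integrableOn_Ioc) tendsto_natCast_atTop_atTop
    filter_upwards [eventually_ge_atTop 1] with n hn
    have hcast : (0:ℝ) ≤ (n:ℝ) := Nat.cast_nonneg n
    have : (∫ v in v₀..(n:ℝ), ‖φ v‖) = ∫ v in v₀..(n:ℝ), φ v := by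
      apply intervalIntegral.integral_congr
      intro x hx
      exact Real.norm_of_nonneg (hφnn x)
    rw [this]
    exact hbound n hcast
  refine ⟨v₀, hv₀pos, ?_⟩
  apply hφint.congr_fun _ measurableSet_Ioi
  intro x hx
  simp only [hφ, max_eq_left (le_of_lt (Set.mem_Ioi.1 hx))]

end ODE2


section ODE3
variable (ψ : ℝ → ℝ)

lemma converse_ode (hconv : ConvexOn ℝ (Set.Ici 0) ψ) (h0 : ψ 0 = 0)
    (u : ℝ → ℝ → ℝ)
    (hu0 : ∀ lam, 0 ≤ lam → u 0 lam = lam)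
    (huode : ∀ lam, 0 ≤ lam → ∀ t, 0 ≤ t → HasDerivAt (fun s => u s lam) (-ψ (u t lam)) t)
    (hmono : ∀ t, 0 ≤ t → ∀ lam lam', 0 ≤ lam → lam ≤ lam' → u t lam ≤ u t lam')
    (v₂ : ℝ) (hv₂ : 0 < v₂) (hψv₂ : 0 < ψ v₂)
    (a : ℝ) (ha : 0 < a) (hint : IntegrableOn (fun x => (ψ x)⁻¹) (Set.Ioi a)) :
    ∃ t M, 0 < t ∧ ∀ lam, 0 ≤ lam → u t lam ≤ M := by
  have hψc : ContinuousOn ψ (Set.Ioi 0) := by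
    have := hconv.continuousOn_interior
    rwa [interior_Ici] at this
  have hψposv₂ : ∀ v, v₂ ≤ v → 0 < ψ v := by
    intro v hv
    have hvpos : 0 < v := lt_of_lt_of_le hv₂ hv
    have h1 : 0 < (ψ v₂ / v₂) * v := by positivity
    linarith [psi_lin_lower ψ hconv h0 hv₂ hv]
  set v₁ : ℝ := max v₂ a + 1 with hv₁def
  have hv₁v₂ : v₂ ≤ v₁ := le_trans (le_max_left _ _) (by linarith)
  have hv₁a : a < v₁ := lt_of_le_of_lt (le_max_right v₂ a) (by linarith)
  have hv₁pos : 0 < v₁ := hv₂.trans_le hv₁v₂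
  have hψpos : ∀ v, v₁ ≤ v → 0 < ψ v := fun v hv => hψposv₂ v (hv₁v₂.trans hv)
  have hint₁ : IntegrableOn (fun x => (ψ x)⁻¹) (Set.Ioi v₁) :=
    hint.mono_set (Set.Ioi_subset_Ioi hv₁a.le)
  set C : ℝ := ∫ x in Set.Ioi v₁, (ψ x)⁻¹ with hC
  have hC0 : 0 ≤ C :=
    setIntegral_nonneg measurableSet_Ioi
      (fun x hx => inv_nonneg.2 (hψpos x (le_of_lt hx)).le)
  set t : ℝ := C + 1 with htdef
  have ht : 0 < t := by positivity
  set φ : ℝ → ℝ := fun v => (ψ (max v v₁))⁻¹ with hφ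
  have hφnn : ∀ v, 0 ≤ φ v := phi_nonneg ψ v₁ hψpos
  -- interval integrals of φ are bounded by C
  have hHle : ∀ lam, v₁ < lam → (∫ v in v₁..lam, φ v) ≤ C := by
    intro lam hlam
    rw [intervalIntegral.integral_of_le hlam.le]
    have heq : ∫ v in Set.Ioc v₁ lam, φ v = ∫ v in Set.Ioc v₁ lam, (ψ v)⁻¹ := by
      apply setIntegral_congr_fun measurableSet_Ioc
      intro x hx
      simp only [hφ, max_eq_left (le_of_lt hx.1)]
    rw [heq]
    apply setIntegral_mono_set hint₁
    · filter_upwards [ae_restrict_mem measurableSet_Ioi] with x hx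
      exact inv_nonneg.2 (hψpos x (le_of_lt hx)).le
    · exact HasSubset.Subset.eventuallyLE Set.Ioc_subset_Ioi_self
  -- claim 1 : the solution from any level drops below v₁ before time t
  have claim1 : ∀ lam, v₁ < lam → ∃ s, 0 ≤ s ∧ s ≤ t ∧ u s lam ≤ v₁ := by
    intro lam hlam
    by_contra hcon
    push_neg at hcon
    have hlam0 : (0:ℝ) ≤ lam := (hv₁pos.trans hlam).le
    set g : ℝ → ℝ := fun s => u s lam with hg
    have hgd : ∀ s, 0 ≤ s → HasDerivAt g (-ψ (g s)) s := fun s hs => huode lam hlam0 s hs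
    have hgt : ∀ s, 0 ≤ s → s < t → v₁ ≤ g s := fun s hs0 hst =>
      (hcon s hs0 hst.le).le
    have hkey := ode_const ψ v₁ hψc hv₁pos hψpos g hgd t ht.le hgt
    have hg0 : g 0 = lam := hu0 lam hlam0
    have hgtv : v₁ ≤ g t := (hcon t (le_of_lt ht) le_rfl).le
    have hnn : 0 ≤ ∫ v in v₁..(g t), φ v :=
      intervalIntegral.integral_nonneg hgtv (fun x _ => hφnn x)
    rw [hg0] at hkey
    have := hHle lam hlam
    rw [← hkey] at this
    linarith
  -- claim 2 : once below v₁, stays below v₁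
  have claim2 : ∀ lam, v₁ < lam → u t lam ≤ v₁ := by
    intro lam hlam
    obtain ⟨s₀, hs₀0, hs₀t, hs₀⟩ := claim1 lam hlam
    by_contra hgtc
    push_neg at hgtc
    have hlam0 : (0:ℝ) ≤ lam := (hv₁pos.trans hlam).le
    set g : ℝ → ℝ := fun s => u s lam with hg
    have hgd : ∀ s, 0 ≤ s → HasDerivAt g (-ψ (g s)) s := fun s hs => huode lam hlam0 s hs
    have hgcont : ContinuousOn g (Set.Icc s₀ t) := fun s hs =>
      (hgd s (hs₀0.trans hs.1)).continuousAt.continuousWithinAt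
    set B : Set ℝ := Set.Icc s₀ t ∩ g ⁻¹' (Set.Iic v₁) with hB
    have hBclosed : IsClosed B :=
      hgcont.preimage_isClosed_of_isClosed isClosed_Icc isClosed_Iic
    have hBne : B.Nonempty := ⟨s₀, ⟨le_rfl, hs₀t⟩, by
      simp only [Set.mem_preimage, Set.mem_Iic]; exact hs₀⟩
    have hBbdd : BddAbove B := ⟨t, fun x hx => hx.1.2⟩
    set σ := sSup B with hσ
    have hσB : σ ∈ B := hBclosed.csSup_mem hBne hBbdd
    have hσs₀ : s₀ ≤ σ := hσB.1.1
    have hσt : σ ≤ t := hσB.1.2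
    have hgσ : g σ ≤ v₁ := hσB.2
    have hσlt : σ < t := by
      rcases lt_or_eq_of_le hσt with h | h
      · exact h
      · exfalso; rw [h] at hgσ; exact absurd hgσ (not_le.2 hgtc)
    have hafter : ∀ q, σ < q → q ≤ t → v₁ < g q := by
      intro q hq1 hq2
      by_contra hle
      push_neg at hle
      have hqB : q ∈ B := ⟨⟨hσs₀.trans hq1.le, hq2⟩, by
        simp only [Set.mem_preimage, Set.mem_Iic]; exact hle⟩
      exact absurd (le_csSup hBbdd hqB) (not_le.2 hq1)
    have hanti : StrictAntiOn g (Set.Icc σ t) := by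
      apply strictAntiOn_of_deriv_neg (convex_Icc σ t)
      · exact fun s hs => (hgd s ((hs₀0.trans hσs₀).trans hs.1)).continuousAt.continuousWithinAt
      · intro x hx
        rw [interior_Icc] at hx
        have hx0 : 0 ≤ x := (hs₀0.trans hσs₀).trans hx.1.le
        rw [(hgd x hx0).deriv]
        have : v₁ < g x := hafter x hx.1 hx.2.le
        have := hψpos (g x) this.le
        linarith
    have := hanti ⟨le_rfl, hσt⟩ ⟨hσlt.le, le_rfl⟩ hσlt
    -- g t < g σ ≤ v₁
    exact absurd (lt_of_lt_of_le this hgσ) (not_lt.2 hgtc.le)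
  refine ⟨t, v₁, ht, ?_⟩
  intro lam hlam
  rcases le_or_gt lam (v₁ + 1) with h | h
  · exact le_trans (hmono t ht.le lam (v₁+1) hlam h) (claim2 (v₁+1) (by linarith))
  · exact claim2 lam (by linarith)

end ODE3


section Prob
variable {Ω : Type*} [MeasurableSpace Ω]
variable (P : ℝ → Measure Ω) (Z : ℝ → Ω → ℝ) (u : ℝ → ℝ → ℝ)

lemma exp_integrable
    (hLap : ∀ z, 0 ≤ z → ∀ t, 0 ≤ t → ∀ lam, 0 ≤ lam →
      ∫ ω, Real.exp (-lam * Z t ω) ∂(P z) = Real.exp (-z * u t lam))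
    {z : ℝ} (hz : 0 ≤ z) {t : ℝ} (ht : 0 ≤ t) {lam : ℝ} (hlam : 0 ≤ lam) :
    Integrable (fun ω => Real.exp (-lam * Z t ω)) (P z) := by
  by_contra h
  have := integral_undef h
  rw [hLap z hz t ht lam hlam] at this
  exact (Real.exp_pos _).ne' this

lemma u_nonneg (hP : ∀ z, 0 ≤ z → IsProbabilityMeasure (P z))
    (hZpos : ∀ t ω, 0 ≤ Z t ω)
    (hLap : ∀ z, 0 ≤ z → ∀ t, 0 ≤ t → ∀ lam, 0 ≤ lam →
      ∫ ω, Real.exp (-lam * Z t ω) ∂(P z) = Real.exp (-z * u t lam))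
    {z : ℝ} (hz : 0 < z) {t : ℝ} (ht : 0 ≤ t) {lam : ℝ} (hlam : 0 ≤ lam) :
    0 ≤ u t lam := by
  haveI := hP z hz.le
  have h1 : ∫ ω, Real.exp (-lam * Z t ω) ∂(P z) ≤ ∫ _ω, (1:ℝ) ∂(P z) := by
    apply integral_mono (exp_integrable P Z u hLap hz.le ht hlam) (integrable_const 1)
    intro ω
    exact Real.exp_le_one_iff.2 (by nlinarith [hZpos t ω])
  rw [hLap z hz.le t ht lam hlam, MeasureTheory.integral_const] at h1
  simp only [measure_univ, ENNReal.toReal_one, smul_eq_mul, one_mul, probReal_univ] at h1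
  have h2 : -z * u t lam ≤ 0 := Real.exp_le_one_iff.1 h1
  nlinarith

lemma u_mono (hZpos : ∀ t ω, 0 ≤ Z t ω)
    (hLap : ∀ z, 0 ≤ z → ∀ t, 0 ≤ t → ∀ lam, 0 ≤ lam →
      ∫ ω, Real.exp (-lam * Z t ω) ∂(P z) = Real.exp (-z * u t lam))
    {z : ℝ} (hz : 0 < z) {t : ℝ} (ht : 0 ≤ t) {lam lam' : ℝ}
    (hlam : 0 ≤ lam) (hle : lam ≤ lam') :
    u t lam ≤ u t lam' := by
  have hlam' : 0 ≤ lam' := hlam.trans hle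
  have h1 : ∫ ω, Real.exp (-lam' * Z t ω) ∂(P z) ≤ ∫ ω, Real.exp (-lam * Z t ω) ∂(P z) := by
    apply integral_mono (exp_integrable P Z u hLap hz.le ht hlam')
      (exp_integrable P Z u hLap hz.le ht hlam)
    intro ω
    apply Real.exp_le_exp.2
    nlinarith [hZpos t ω]
  rw [hLap z hz.le t ht lam hlam, hLap z hz.le t ht lam' hlam'] at h1
  have := Real.exp_le_exp.1 h1
  nlinarith

lemma exp_tendsto_indicator (hP : ∀ z, 0 ≤ z → IsProbabilityMeasure (P z))
    (hZpos : ∀ t ω, 0 ≤ Z t ω)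
    (hLap : ∀ z, 0 ≤ z → ∀ t, 0 ≤ t → ∀ lam, 0 ≤ lam →
      ∫ ω, Real.exp (-lam * Z t ω) ∂(P z) = Real.exp (-z * u t lam))
    {z : ℝ} (hz : 0 < z) {t : ℝ} (ht : 0 ≤ t) :
    Tendsto (fun n : ℕ => Real.exp (-z * u t n)) atTop
      (𝓝 (∫ ω, Set.indicator {ω | Z t ω = 0} (fun _ => (1:ℝ)) ω ∂(P z))) := by
  haveI := hP z hz.le
  have hlim : ∀ ω, Tendsto (fun n : ℕ => Real.exp (-(n:ℝ) * Z t ω)) atTop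
      (𝓝 (Set.indicator {ω | Z t ω = 0} (fun _ => (1:ℝ)) ω)) := by
    intro ω
    rcases eq_or_lt_of_le (hZpos t ω) with hZ | hZ
    · have hmem : ω ∈ {ω | Z t ω = 0} := by simp [Set.mem_setOf_eq, ← hZ]
      rw [Set.indicator_of_mem hmem]
      have : ∀ n : ℕ, Real.exp (-(n:ℝ) * Z t ω) = 1 := by
        intro n; rw [← hZ]; simp
      simp only [this]
      exact tendsto_const_nhds
    · have hmem : ω ∉ {ω | Z t ω = 0} := by
        simp only [Set.mem_setOf_eq]; exact fun h => (ne_of_gt hZ) h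
      rw [Set.indicator_of_notMem hmem]
      have heq : ∀ n : ℕ, Real.exp (-(n:ℝ) * Z t ω) = (Real.exp (-Z t ω))^n := by
        intro n
        rw [← Real.exp_nat_mul]
        ring_nf
      simp only [heq]
      apply tendsto_pow_atTop_nhds_zero_of_lt_one (Real.exp_pos _).le
      rw [Real.exp_lt_one_iff]
      linarith
  have := tendsto_integral_of_dominated_convergence (fun _ => (1:ℝ))
    (fun n : ℕ => (exp_integrable P Z u hLap hz.le ht (Nat.cast_nonneg n)).aestronglyMeasurable)
    (integrable_const 1)
    (fun n : ℕ => by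
      filter_upwards with ω
      rw [Real.norm_eq_abs, abs_of_pos (Real.exp_pos _)]
      exact Real.exp_le_one_iff.2 (by nlinarith [hZpos t ω]))
    (by filter_upwards with ω; exact hlim ω)
  have heq : ∀ n : ℕ, ∫ ω, Real.exp (-(n:ℝ) * Z t ω) ∂(P z) = Real.exp (-z * u t n) :=
    fun n => hLap z hz.le t ht n (Nat.cast_nonneg n)
  simpa only [heq] using this

lemma prob_pos_iff_bound (hP : ∀ z, 0 ≤ z → IsProbabilityMeasure (P z))
    (hZpos : ∀ t ω, 0 ≤ Z t ω)
    (hLap : ∀ z, 0 ≤ z → ∀ t, 0 ≤ t → ∀ lam, 0 ≤ lam →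
      ∫ ω, Real.exp (-lam * Z t ω) ∂(P z) = Real.exp (-z * u t lam))
    {z : ℝ} (hz : 0 < z) {t : ℝ} (ht : 0 ≤ t) :
    (0 < P z {ω | Z t ω = 0}) ↔ ∃ M, 0 ≤ M ∧ ∀ lam, 0 ≤ lam → u t lam ≤ M := by
  haveI := hP z hz.le
  set g : Ω → ℝ := fun ω => Set.indicator {ω | Z t ω = 0} (fun _ => (1:ℝ)) ω with hgdef
  have hg_nonneg : ∀ ω, 0 ≤ g ω := fun ω => Set.indicator_nonneg (fun _ _ => zero_le_one) ω
  have htend := exp_tendsto_indicator P Z u hP hZpos hLap hz ht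
  have hg_meas : AEStronglyMeasurable g (P z) := by
    apply aestronglyMeasurable_of_tendsto_ae (u := atTop)
      (f := fun n : ℕ => fun ω => Real.exp (-(n:ℝ) * Z t ω))
      (fun n => (exp_integrable P Z u hLap hz.le ht (Nat.cast_nonneg n)).aestronglyMeasurable)
    filter_upwards with ω
    -- same pointwise limit as in exp_tendsto_indicator
    rcases eq_or_lt_of_le (hZpos t ω) with hZ | hZ
    · have hmem : ω ∈ {ω | Z t ω = 0} := by simp [Set.mem_setOf_eq, ← hZ]
      rw [hgdef]
      simp only [Set.indicator_of_mem hmem]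
      have : ∀ n : ℕ, Real.exp (-(n:ℝ) * Z t ω) = 1 := by
        intro n; rw [← hZ]; simp
      simp only [this]
      exact tendsto_const_nhds
    · have hmem : ω ∉ {ω | Z t ω = 0} := by
        simp only [Set.mem_setOf_eq]; exact fun h => (ne_of_gt hZ) h
      rw [hgdef]
      simp only [Set.indicator_of_notMem hmem]
      have heq : ∀ n : ℕ, Real.exp (-(n:ℝ) * Z t ω) = (Real.exp (-Z t ω))^n := by
        intro n
        rw [← Real.exp_nat_mul]
        ring_nf
      simp only [heq]
      apply tendsto_pow_atTop_nhds_zero_of_lt_one (Real.exp_pos _).le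
      rw [Real.exp_lt_one_iff]
      linarith
  have hg_int : Integrable g (P z) := by
    apply Integrable.mono (integrable_const (1:ℝ)) hg_meas
    filter_upwards with ω
    rw [Real.norm_eq_abs, abs_of_nonneg (hg_nonneg ω), norm_one]
    rw [hgdef]
    by_cases h : ω ∈ {ω | Z t ω = 0}
    · simp [Set.indicator_of_mem h]
    · simp [Set.indicator_of_notMem h]
  have hiff : P z {ω | Z t ω = 0} = 0 ↔ ∫ ω, g ω ∂(P z) = 0 := by
    constructor
    · intro hA
      have hae : g =ᵐ[P z] 0 := by
        rw [Filter.EventuallyEq, ae_iff]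
        apply measure_mono_null _ hA
        intro ω hω
        simp only [Set.mem_setOf_eq, Pi.zero_apply] at hω
        by_contra hmem
        exact hω (by rw [hgdef]; simp only [Set.indicator_of_notMem hmem])
      rw [integral_congr_ae hae]
      simp
    · intro hI
      have := (integral_eq_zero_iff_of_nonneg_ae
        (by filter_upwards with ω; exact hg_nonneg ω) hg_int).1 hI
      rw [Filter.EventuallyEq, ae_iff] at this
      apply measure_mono_null _ this
      intro ω hω
      simp only [Set.mem_setOf_eq, Pi.zero_apply]
      rw [hgdef]
      simp only [Set.indicator_of_mem hω]
      exact one_ne_zero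
  constructor
  · intro hpos
    have hq : 0 < ∫ ω, g ω ∂(P z) := by
      rcases lt_or_eq_of_le (integral_nonneg (f := g) (μ := P z) hg_nonneg) with h | h
      · exact h
      · exfalso
        exact absurd (hiff.2 h.symm) (fun hc => (ne_of_gt hpos) hc)
    set q := ∫ ω, g ω ∂(P z) with hq'
    have hev : ∀ᶠ n : ℕ in atTop, q/2 ≤ Real.exp (-z * u t n) :=
      htend.eventually (eventually_ge_nhds (by linarith))
    obtain ⟨m₀, hm₀⟩ := hev.exists_forall_of_atTop
    set M : ℝ := max (Real.log (q/2) / (-z)) 0 with hM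
    refine ⟨M, le_max_right _ _, ?_⟩
    intro lam hlam
    obtain ⟨m, hm⟩ := exists_nat_ge (max lam m₀)
    have hmlam : lam ≤ (m:ℝ) := le_trans (le_max_left _ _) hm
    have hmm₀ : m₀ ≤ m := by
      have := le_trans (le_max_right lam m₀) hm
      exact_mod_cast this
    have h1 : u t lam ≤ u t m := u_mono P Z u hZpos hLap hz ht hlam hmlam
    have h2 : q/2 ≤ Real.exp (-z * u t m) := hm₀ m hmm₀
    have h3 : Real.log (q/2) ≤ -z * u t m :=
      (Real.log_le_iff_le_exp (by linarith)).2 h2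
    have h4 : u t m ≤ Real.log (q/2) / (-z) := by
      rw [le_div_iff_of_neg (by linarith : -z < 0)]
      linarith
    exact h1.trans (h4.trans (le_max_left _ _))
  · rintro ⟨M, hM0, hM⟩
    have hlb : ∀ n : ℕ, Real.exp (-z * M) ≤ Real.exp (-z * u t n) := by
      intro n
      apply Real.exp_le_exp.2
      nlinarith [hM n (Nat.cast_nonneg n)]
    have hq : Real.exp (-z * M) ≤ ∫ ω, g ω ∂(P z) :=
      le_of_tendsto_of_tendsto' tendsto_const_nhds htend hlb
    have hqpos : 0 < ∫ ω, g ω ∂(P z) := lt_of_lt_of_le (Real.exp_pos _) hq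
    rw [pos_iff_ne_zero]
    intro hA
    rw [hiff.1 hA] at hqpos
    exact lt_irrefl 0 hqpos

end Prob

end CSBPAux

/-- a nondegenerate CSBP `Z` with branching mechanism `ψ`
(encoded through the family of laws `P z`, Laplace exponent `u` solving
`∂_t u_t(λ) = −ψ(u_t(λ))`, `u_0(λ) = λ`, with `E_z e^{−λZ_t} = e^{−z u_t(λ)}`
and `0` absorbing) is absorbed at `0` in finite time with positive
probability, i.e. `P(∃ t > 0, Z_t = 0) > 0`, if and only if
`∫^∞ dx/ψ(x) < ∞` (i.e. `1/ψ` is integrable on a neighborhood of `+∞`). -/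
theorem csbp_absorption_iff_integrable_inverse_psi
    {Ω : Type*} [MeasurableSpace Ω]
    (r γ : ℝ) (hγ : 0 ≤ γ) (μjump : Measure ℝ)
    (hsupp : μjump (Set.Ioi (0 : ℝ))ᶜ = 0)
    (hmom : (∫⁻ h in Set.Ioi (0 : ℝ), ENNReal.ofReal (min h (h ^ 2)) ∂μjump) ≠ ⊤)
    (hnondeg : ¬ (r = 0 ∧ γ = 0 ∧ μjump = 0))
    (ψ : ℝ → ℝ)
    (hψ : ∀ lam, ψ lam =
      -r * lam + γ * lam ^ 2 +
        ∫ h in Set.Ioi (0 : ℝ), (Real.exp (-lam * h) - 1 + lam * h) ∂μjump)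
    (P : ℝ → Measure Ω) (hP : ∀ z, 0 ≤ z → IsProbabilityMeasure (P z))
    (Z : ℝ → Ω → ℝ) (hZpos : ∀ t ω, 0 ≤ Z t ω)
    (habsorbing : ∀ z, 0 ≤ z → ∀ᵐ ω ∂(P z),
      ∀ s t, 0 ≤ s → s ≤ t → Z s ω = 0 → Z t ω = 0)
    (u : ℝ → ℝ → ℝ)
    (hu0 : ∀ lam, 0 ≤ lam → u 0 lam = lam)
    (huode : ∀ lam, 0 ≤ lam → ∀ t, 0 ≤ t →
      HasDerivAt (fun s => u s lam) (-ψ (u t lam)) t)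
    (hLap : ∀ z, 0 ≤ z → ∀ t, 0 ≤ t → ∀ lam, 0 ≤ lam →
      ∫ ω, Real.exp (-lam * Z t ω) ∂(P z) = Real.exp (-z * u t lam)) :
    ∀ z, 0 < z →
      (0 < P z {ω | ∃ t, 0 < t ∧ Z t ω = 0} ↔
        ∃ a, 0 < a ∧ IntegrableOn (fun x => (ψ x)⁻¹) (Set.Ioi a)) := by
  intro z hz
  have hconv := psi_convex r γ μjump ψ hγ hmom hψ
  have h0 := psi_zero r γ μjump ψ hψ
  constructor
  · intro hpos
    have hS : ∃ n : ℕ, 0 < P z {ω | Z ((n:ℝ)+1) ω = 0} := by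
      by_contra hno
      push_neg at hno
      have hzero : ∀ n : ℕ, P z {ω | Z ((n:ℝ)+1) ω = 0} = 0 := fun n =>
        le_zero_iff.1 (hno n)
      have hTc : P z {ω | ¬ ∀ s t, 0 ≤ s → s ≤ t → Z s ω = 0 → Z t ω = 0} = 0 := by
        have := habsorbing z hz.le
        rwa [ae_iff] at this
      have hsub : {ω | ∃ t, 0 < t ∧ Z t ω = 0} ⊆
          {ω | ¬ ∀ s t, 0 ≤ s → s ≤ t → Z s ω = 0 → Z t ω = 0} ∪
            ⋃ n : ℕ, {ω | Z ((n:ℝ)+1) ω = 0} := by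
        intro ω hω
        obtain ⟨t, ht, hZt⟩ := hω
        by_cases hprop : ∀ s t, 0 ≤ s → s ≤ t → Z s ω = 0 → Z t ω = 0
        · right
          obtain ⟨n, hn⟩ := exists_nat_ge t
          refine Set.mem_iUnion.2 ⟨n, ?_⟩
          exact hprop t ((n:ℝ)+1) ht.le (by linarith) hZt
        · left; exact hprop
      have hnull : P z ({ω | ¬ ∀ s t, 0 ≤ s → s ≤ t → Z s ω = 0 → Z t ω = 0} ∪
          ⋃ n : ℕ, {ω | Z ((n:ℝ)+1) ω = 0}) = 0 :=
        measure_union_null hTc (measure_iUnion_null hzero)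
      exact absurd (measure_mono_null hsub hnull) hpos.ne'
    obtain ⟨n, hn⟩ := hS
    have ht1 : (0:ℝ) ≤ (n:ℝ)+1 := by positivity
    obtain ⟨M, hM0, hM⟩ := (prob_pos_iff_bound P Z u hP hZpos hLap hz ht1).1 hn
    exact forward_ode ψ hconv h0 u hu0 huode ((n:ℝ)+1) (by positivity) M hM0 hM
  · rintro ⟨a, ha, hint⟩
    have hnz := psi_not_zero r γ μjump ψ hγ hsupp hmom hnondeg hψ
    obtain ⟨v₂, hv₂, hψv₂⟩ := psi_exists_pos_of_integrable ψ hconv h0 hnz ha hint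
    have hmono' : ∀ t, 0 ≤ t → ∀ lam lam', 0 ≤ lam → lam ≤ lam' → u t lam ≤ u t lam' :=
      fun t ht lam lam' h1 h2 => u_mono P Z u hZpos hLap hz ht h1 h2
    obtain ⟨t, M, ht, hM⟩ := converse_ode ψ hconv h0 u hu0 huode hmono' v₂ hv₂ hψv₂ a ha hint
    have hbound : ∃ M', 0 ≤ M' ∧ ∀ lam, 0 ≤ lam → u t lam ≤ M' :=
      ⟨max M 0, le_max_right _ _, fun lam hl => (hM lam hl).trans (le_max_left _ _)⟩
    have hAt : 0 < P z {ω | Z t ω = 0} :=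
      (prob_pos_iff_bound P Z u hP hZpos hLap hz ht.le).2 hbound
    apply lt_of_lt_of_le hAt
    apply measure_mono
    intro ω hω
    exact ⟨t, ht, hω⟩
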